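/- Let M = (ρ, E) be a matroid with ∅ ∈ Z(M) and E ∈ Z(M), and let X ⊆ E be a nonempty cyclic set of M. Then the minimum distance of the restriction M|X satisfies d_X = |X| − ρ(X) + 1 − max{η(Y) : Y ∈ Z(M|X), Y ≠ X}, where η(Y) = |Y| − ρ(Y) and Z(M|X) is the collection of cyclic flats of the restriction M|X. In particular, taking X = E, d = n − k + 1 − max{η(Z) : Z ∈ Z(M), Z ≠ E}. -/

import Mathlib

/-- A matroid given by an integer-valued rank function on subsets of a finite ground set. -/
structure RankMatroid (α : Type) [DecidableEq α] where
  E : Finset α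
  rk : Finset α → ℤ
  rk_nonneg : ∀ X : Finset α, X ⊆ E → 0 ≤ rk X
  rk_le_card : ∀ X : Finset α, X ⊆ E → rk X ≤ X.card
  rk_mono : ∀ X Y : Finset α, X ⊆ Y → Y ⊆ E → rk X ≤ rk Y
  rk_submod : ∀ X Y : Finset α, X ⊆ E → Y ⊆ E → rk (X ∪ Y) + rk (X ∩ Y) ≤ rk X + rk Y

namespace RankMatroid

variable {α : Type} [DecidableEq α]

/-- The minimum distance `d_X` of the restriction to `X`:
`d_X = min {|Y| : Y ⊆ X, ρ(X \ Y) < ρ(X)}`. -/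
noncomputable def dist (M : RankMatroid α) (X : Finset α) : ℕ :=
  sInf {m : ℕ | ∃ Y : Finset α, Y ⊆ X ∧ Y.card = m ∧ M.rk (X \ Y) < M.rk X}

/-- Closure: `cl(X) = {y ∈ E : ρ(X ∪ {y}) = ρ(X)}`. -/
def cl (M : RankMatroid α) (X : Finset α) : Finset α :=
  M.E.filter fun y => M.rk (insert y X) = M.rk X

/-- `X` is cyclic if `ρ(X \ {x}) = ρ(X)` for every `x ∈ X`. -/
def Cyclic (M : RankMatroid α) (X : Finset α) : Prop :=
  ∀ x ∈ X, M.rk (X.erase x) = M.rk X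

/-- Cyclic core: `cyc(X) = {x ∈ X : ρ(X \ {x}) = ρ(X)}`. -/
def cyc (M : RankMatroid α) (X : Finset α) : Finset α :=
  X.filter fun x => M.rk (X.erase x) = M.rk X

/-- A cyclic flat is a set which is both cyclic and a flat. -/
def IsCyclicFlat (M : RankMatroid α) (X : Finset α) : Prop :=
  X ⊆ M.E ∧ M.Cyclic X ∧ M.cl X = X

/-- `Z(M)`: the collection of cyclic flats of `M`. -/
def Z (M : RankMatroid α) : Set (Finset α) := {X | M.IsCyclicFlat X}

/-- `M` is non-degenerate: every singleton has rank at least one and `d ≥ 2`. -/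
def NonDegenerate (M : RankMatroid α) : Prop :=
  (∀ x ∈ M.E, 1 ≤ M.rk {x}) ∧ 2 ≤ M.dist M.E

/-- `R` is a repair set for `x` with parameters `(r, δ)`. -/
def IsRepairSet (M : RankMatroid α) (r δ : ℤ) (x : α) (R : Finset α) : Prop :=
  R ⊆ M.E ∧ x ∈ R ∧ (R.card : ℤ) ≤ r + δ - 1 ∧ δ ≤ (M.dist R : ℤ)

/-- The collection of cyclic flats of the restriction `M|X`. -/
def ZIn (M : RankMatroid α) (X : Finset α) : Set (Finset α) :=
  {Y | Y ⊆ X ∧ M.Cyclic Y ∧ X.filter (fun z => M.rk (insert z Y) = M.rk Y) = Y}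

/-- `FX` is the meet, in the lattice `(Z(M), ⊆)`, of all cyclic flats containing `X`. -/
def IsMeetOfFlatsContaining (M : RankMatroid α) (X FX : Finset α) : Prop :=
  FX ∈ M.Z ∧ (∀ F ∈ M.Z, X ⊆ F → FX ⊆ F) ∧
    ∀ W ∈ M.Z, (∀ F ∈ M.Z, X ⊆ F → W ⊆ F) → W ⊆ FX

end RankMatroid

namespace RankMatroid

variable {α : Type} [DecidableEq α] (M : RankMatroid α)

lemma rk_insert_le {A : Finset α} (hA : A ⊆ M.E) {z : α} (hz : z ∈ M.E) :
    M.rk (insert z A) ≤ M.rk A + 1 := by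
  have h := M.rk_submod {z} A (by simpa using hz) hA
  have h1 : M.rk {z} ≤ 1 := by simpa using M.rk_le_card {z} (by simpa using hz)
  have h2 : (0:ℤ) ≤ M.rk ({z} ∩ A) :=
    M.rk_nonneg _ (fun y hy => hA (Finset.mem_of_mem_inter_right hy))
  have h3 : ({z} : Finset α) ∪ A = insert z A := by rw [Finset.insert_eq]
  rw [h3] at h
  linarith

lemma rk_le_insert {A : Finset α} (hA : A ⊆ M.E) {z : α} (hz : z ∈ M.E) :
    M.rk A ≤ M.rk (insert z A) :=
  M.rk_mono A _ (Finset.subset_insert z A) (Finset.insert_subset hz hA)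

lemma rk_erase_ge {A : Finset α} (hA : A ⊆ M.E) {x : α} (hx : x ∈ A) :
    M.rk A ≤ M.rk (A.erase x) + 1 := by
  have := M.rk_insert_le (A := A.erase x) (fun y hy => hA (Finset.mem_of_mem_erase hy)) (hA hx)
  rwa [Finset.insert_erase hx] at this

lemma rk_erase_le {A : Finset α} (hA : A ⊆ M.E) (x : α) :
    M.rk (A.erase x) ≤ M.rk A :=
  M.rk_mono _ A (Finset.erase_subset x A) hA

lemma rk_union_eq {A : Finset α} (hA : A ⊆ M.E) :
    ∀ S : Finset α, S ⊆ M.E → (∀ z ∈ S, M.rk (insert z A) = M.rk A) →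
      M.rk (A ∪ S) = M.rk A := by
  intro S
  induction S using Finset.induction_on with
  | empty => intro _ _; simp
  | @insert z S hzS ih =>
    intro hS h
    have hSE : S ⊆ M.E := fun y hy => hS (Finset.mem_insert_of_mem hy)
    have hzE : z ∈ M.E := hS (Finset.mem_insert_self z S)
    have h1 : M.rk (A ∪ S) = M.rk A := ih hSE (fun y hy => h y (Finset.mem_insert_of_mem hy))
    have h2 : M.rk (insert z A) = M.rk A := h z (Finset.mem_insert_self z S)
    have hins : insert z A ⊆ M.E := Finset.insert_subset hzE hA
    have hus : A ∪ S ⊆ M.E := Finset.union_subset hA hSE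
    have hs := M.rk_submod (insert z A) (A ∪ S) hins hus
    have hu : insert z A ∪ (A ∪ S) = A ∪ insert z S := by
      ext y; simp [or_comm, or_left_comm]
    rw [hu] at hs
    have hsub : A ⊆ insert z A ∩ (A ∪ S) :=
      Finset.subset_inter (Finset.subset_insert z A) Finset.subset_union_left
    have h3 : M.rk A ≤ M.rk (insert z A ∩ (A ∪ S)) :=
      M.rk_mono _ _ hsub (fun y hy => hins (Finset.mem_of_mem_inter_left hy))
    have h4 : M.rk A ≤ M.rk (A ∪ insert z S) :=
      M.rk_mono A _ Finset.subset_union_left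
        (Finset.union_subset hA (Finset.insert_subset hzE hSE))
    linarith

lemma exists_increase {T X : Finset α} (hT : T ⊆ X) (hX : X ⊆ M.E)
    (h : M.rk T < M.rk X) :
    ∃ z ∈ X, z ∉ T ∧ M.rk (insert z T) = M.rk T + 1 := by
  have hTE : T ⊆ M.E := hT.trans hX
  by_contra hc
  push_neg at hc
  have hall : ∀ z ∈ X, M.rk (insert z T) = M.rk T := by
    intro z hz
    by_cases hzT : z ∈ T
    · rw [Finset.insert_eq_self.2 hzT]
    · have hne := hc z hz hzT
      have hle := M.rk_insert_le hTE (hX hz)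
      have hge := M.rk_le_insert hTE (hX hz)
      omega
  have := M.rk_union_eq hTE X hX hall
  rw [Finset.union_eq_right.2 hT] at this
  omega

lemma exists_extension {Y X : Finset α} (hY : Y ⊆ X) (hX : X ⊆ M.E) :
    ∀ j : ℕ, M.rk Y + j ≤ M.rk X →
      ∃ T : Finset α, Y ⊆ T ∧ T ⊆ X ∧ T.card = Y.card + j ∧ M.rk T = M.rk Y + j := by
  intro j
  induction j with
  | zero => intro _; exact ⟨Y, Finset.Subset.refl Y, hY, by simp, by simp⟩
  | succ j ih =>
    intro hj
    obtain ⟨T, hYT, hTX, hcard, hrk⟩ := ih (by push_cast at hj ⊢; linarith)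
    have hlt : M.rk T < M.rk X := by push_cast at hj; omega
    obtain ⟨z, hzX, hzT, hz⟩ := M.exists_increase hTX hX hlt
    exact ⟨insert z T, hYT.trans (Finset.subset_insert z T),
      Finset.insert_subset hzX hTX,
      by rw [Finset.card_insert_of_notMem hzT, hcard]; ring,
      by rw [hz, hrk]; push_cast; ring⟩

lemma cyc_erase_coloop {T : Finset α} (hT : T ⊆ M.E) {x : α} (hx : x ∈ T)
    (hco : M.rk (T.erase x) = M.rk T - 1) :
    M.cyc (T.erase x) = M.cyc T := by
  have hTe : T.erase x ⊆ M.E := (Finset.erase_subset x T).trans hT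
  ext y
  simp only [cyc, Finset.mem_filter, Finset.mem_erase]
  constructor
  · rintro ⟨⟨hyx, hyT⟩, hy⟩
    refine ⟨hyT, ?_⟩
    by_contra hne
    have h1 : M.rk (T.erase y) = M.rk T - 1 := by
      have := M.rk_erase_ge hT hyT
      have := M.rk_erase_le hT y
      omega
    have hu : T.erase x ∪ T.erase y = T := by
      ext z
      simp only [Finset.mem_union, Finset.mem_erase]
      constructor
      · rintro (⟨_, h⟩ | ⟨_, h⟩) <;> exact h
      · intro hz
        by_cases hzx : z = x
        · subst hzx; exact Or.inr ⟨Ne.symm hyx, hz⟩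
        · exact Or.inl ⟨hzx, hz⟩
    have hi : T.erase x ∩ T.erase y = (T.erase x).erase y := by
      ext z; simp only [Finset.mem_inter, Finset.mem_erase]; tauto
    have hs := M.rk_submod (T.erase x) (T.erase y) hTe ((Finset.erase_subset y T).trans hT)
    rw [hu, hi] at hs
    omega
  · rintro ⟨hyT, hy⟩
    have hyx : y ≠ x := by rintro rfl; omega
    refine ⟨⟨hyx, hyT⟩, ?_⟩
    have hcomm : (T.erase x).erase y = (T.erase y).erase x := by
      ext z; simp only [Finset.mem_erase]; tauto
    have hTye : T.erase y ⊆ M.E := (Finset.erase_subset y T).trans hT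
    have h2 : M.rk (T.erase y) ≤ M.rk ((T.erase y).erase x) + 1 :=
      M.rk_erase_ge hTye (Finset.mem_erase.2 ⟨Ne.symm hyx, hx⟩)
    have h3 : M.rk ((T.erase x).erase y) ≤ M.rk (T.erase x) := M.rk_erase_le hTe y
    rw [← hcomm] at h2
    omega

lemma cyc_good :
    ∀ n : ℕ, ∀ T : Finset α, T.card = n → T ⊆ M.E →
      M.Cyclic (M.cyc T) ∧ ((M.cyc T).card : ℤ) - M.rk (M.cyc T) = (T.card : ℤ) - M.rk T := by
  intro n
  induction n using Nat.strong_induction_on with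
  | _ n ih =>
    intro T hcard hT
    by_cases hall : M.cyc T = T
    · constructor
      · rw [hall]
        intro x hx
        have hmem : x ∈ M.cyc T := hall.symm ▸ hx
        exact (Finset.mem_filter.1 hmem).2
      · rw [hall]
    · have hss : M.cyc T ⊂ T :=
        Finset.ssubset_iff_subset_ne.2 ⟨Finset.filter_subset _ T, hall⟩
      obtain ⟨x, hxT, hxc⟩ := Finset.exists_of_ssubset hss
      have hne : M.rk (T.erase x) ≠ M.rk T := by
        intro h; exact hxc (Finset.mem_filter.2 ⟨hxT, h⟩)
      have hco : M.rk (T.erase x) = M.rk T - 1 := by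
        have := M.rk_erase_ge hT hxT
        have := M.rk_erase_le hT x
        omega
      have hcyceq : M.cyc (T.erase x) = M.cyc T := M.cyc_erase_coloop hT hxT hco
      have hcard' : (T.erase x).card = n - 1 := by
        rw [Finset.card_erase_of_mem hxT, hcard]
      have hnpos : 1 ≤ n := by
        rw [← hcard]; exact Finset.card_pos.2 ⟨x, hxT⟩
      have hlt : n - 1 < n := by omega
      obtain ⟨hc1, hc2⟩ := ih (n - 1) hlt (T.erase x) hcard'
        ((Finset.erase_subset x T).trans hT)
      rw [hcyceq] at hc1 hc2
      refine ⟨hc1, ?_⟩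
      rw [hc2, hco, Finset.card_erase_of_mem hxT]
      have : 1 ≤ T.card := Finset.card_pos.2 ⟨x, hxT⟩
      push_cast [Nat.cast_sub this]
      ring

/-- The key lemma for the lower bound: from any `T ⊆ X` of deficient rank we produce a
proper cyclic flat of `M|X` with at least the nullity of `T`. -/
lemma key_lemma {X T : Finset α} (hX : X ⊆ M.E) (hT : T ⊆ X)
    (hrT : M.rk T < M.rk X) :
    ∃ Y ∈ M.ZIn X, Y ≠ X ∧ (T.card : ℤ) - M.rk T ≤ (Y.card : ℤ) - M.rk Y := by
  have hTE : T ⊆ M.E := hT.trans hX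
  obtain ⟨hcyc0, heta0⟩ := M.cyc_good T.card T rfl hTE
  set Y0 := M.cyc T with hY0def
  have hY0T : Y0 ⊆ T := Finset.filter_subset _ T
  have hY0X : Y0 ⊆ X := hY0T.trans hT
  have hY0E : Y0 ⊆ M.E := hY0X.trans hX
  set Y := X.filter (fun z => M.rk (insert z Y0) = M.rk Y0) with hYdef
  have hYX : Y ⊆ X := Finset.filter_subset _ X
  have hYE : Y ⊆ M.E := hYX.trans hX
  have hY0Y : Y0 ⊆ Y := by
    intro z hz
    exact Finset.mem_filter.2 ⟨hY0X hz, by rw [Finset.insert_eq_self.2 hz]⟩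
  have hrkY : M.rk Y = M.rk Y0 := by
    have h := M.rk_union_eq hY0E Y hYE (fun z hz => (Finset.mem_filter.1 hz).2)
    rwa [Finset.union_eq_right.2 hY0Y] at h
  have hrkY0T : M.rk Y0 ≤ M.rk T := M.rk_mono Y0 T hY0T hTE
  -- Y is cyclic
  have hYcyc : M.Cyclic Y := by
    intro x hx
    by_cases hxY0 : x ∈ Y0
    · have hsub : Y0.erase x ⊆ Y.erase x := fun z hz =>
        Finset.mem_erase.2 ⟨(Finset.mem_erase.1 hz).1, hY0Y (Finset.mem_of_mem_erase hz)⟩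
      have h1 : M.rk (Y0.erase x) ≤ M.rk (Y.erase x) :=
        M.rk_mono _ _ hsub ((Finset.erase_subset x Y).trans hYE)
      have h2 : M.rk (Y0.erase x) = M.rk Y0 := hcyc0 x hxY0
      have h3 : M.rk (Y.erase x) ≤ M.rk Y := M.rk_erase_le hYE x
      omega
    · have hsub : Y0 ⊆ Y.erase x := fun z hz =>
        Finset.mem_erase.2 ⟨fun h => hxY0 (h ▸ hz), hY0Y hz⟩
      have h1 : M.rk Y0 ≤ M.rk (Y.erase x) :=
        M.rk_mono _ _ hsub ((Finset.erase_subset x Y).trans hYE)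
      have h3 : M.rk (Y.erase x) ≤ M.rk Y := M.rk_erase_le hYE x
      omega
  -- Y is a flat of M|X
  have hYflat : X.filter (fun z => M.rk (insert z Y) = M.rk Y) = Y := by
    ext z
    simp only [Finset.mem_filter]
    constructor
    · rintro ⟨hzX, hz⟩
      have hsub : insert z Y0 ⊆ insert z Y := Finset.insert_subset_insert z hY0Y
      have h1 : M.rk (insert z Y0) ≤ M.rk (insert z Y) :=
        M.rk_mono _ _ hsub (Finset.insert_subset (hX hzX) hYE)
      have h2 : M.rk Y0 ≤ M.rk (insert z Y0) := M.rk_le_insert hY0E (hX hzX)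
      have : M.rk (insert z Y0) = M.rk Y0 := by omega
      exact Finset.mem_filter.2 ⟨hzX, this⟩
    · intro hz
      exact ⟨hYX hz, by rw [Finset.insert_eq_self.2 hz]⟩
  have hYneX : Y ≠ X := by
    intro h
    have : M.rk Y = M.rk X := by rw [h]
    omega
  refine ⟨Y, ⟨hYX, hYcyc, hYflat⟩, hYneX, ?_⟩
  have hcardle : (Y0.card : ℤ) ≤ Y.card := by
    exact_mod_cast Finset.card_le_card hY0Y
  omega

end RankMatroid


/-- For a nonempty cyclic set `X`,
`d_X = |X| − ρ(X) + 1 − max{η(Y) : Y ∈ Z(M|X), Y ≠ X}`. -/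
theorem stmt10 {α : Type} [DecidableEq α] (M : RankMatroid α)
    (h0 : ∅ ∈ M.Z) (h1 : M.E ∈ M.Z)
    (X : Finset α) (hXE : X ⊆ M.E) (hXne : X.Nonempty) (hXcyc : M.Cyclic X)
    (m : ℤ)
    (hm : IsGreatest {v : ℤ | ∃ Y ∈ M.ZIn X, Y ≠ X ∧ v = (Y.card : ℤ) - M.rk Y} m) :
    (M.dist X : ℤ) = (X.card : ℤ) - M.rk X + 1 - m := by
  classical
  obtain ⟨⟨Ym, hYmZ, hYmne, hval⟩, hub⟩ := hm
  obtain ⟨hYmX, hYmcyc, hYmflat⟩ := hYmZ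
  have hYmE : Ym ⊆ M.E := hYmX.trans hXE
  -- ρ(Ym) + 1 ≤ ρ(X)
  have hrk1 : M.rk Ym + 1 ≤ M.rk X := by
    obtain ⟨z, hzX, hzYm⟩ := Finset.exists_of_ssubset
      (Finset.ssubset_iff_subset_ne.2 ⟨hYmX, hYmne⟩)
    have hne : M.rk (insert z Ym) ≠ M.rk Ym := by
      intro h
      exact hzYm (hYmflat ▸ Finset.mem_filter.2 ⟨hzX, h⟩)
    have hle := M.rk_insert_le hYmE (hXE hzX)
    have hge := M.rk_le_insert hYmE (hXE hzX)
    have hle2 : M.rk (insert z Ym) ≤ M.rk X :=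
      M.rk_mono _ X (Finset.insert_subset hzX hYmX) hXE
    omega
  -- extend Ym to a set T of rank ρ(X) - 1
  set j : ℕ := (M.rk X - 1 - M.rk Ym).toNat with hjdef
  have hjval : (j : ℤ) = M.rk X - 1 - M.rk Ym := Int.toNat_of_nonneg (by omega)
  obtain ⟨T, hYmT, hTX, hTcard, hTrk⟩ := M.exists_extension hYmX hXE j (by omega)
  have hTrk' : M.rk T = M.rk X - 1 := by omega
  set c : ℕ := X.card - T.card with hcdef
  have hTleX : T.card ≤ X.card := Finset.card_le_card hTX
  have hcval : (c : ℤ) = (X.card : ℤ) - M.rk X + 1 - m := by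
    have : (c : ℤ) = (X.card : ℤ) - T.card := by
      rw [hcdef]; exact Nat.cast_sub hTleX
    rw [this, hTcard]
    push_cast
    omega
  -- c is in the distance set
  have hmem : c ∈ {k : ℕ | ∃ Y : Finset α, Y ⊆ X ∧ Y.card = k ∧ M.rk (X \ Y) < M.rk X} := by
    refine ⟨X \ T, Finset.sdiff_subset, ?_, ?_⟩
    · rw [Finset.card_sdiff_of_subset hTX]
    · rw [Finset.sdiff_sdiff_eq_self hTX, hTrk']
      omega
  -- every member of the distance set is at least c
  have hlb : ∀ k ∈ {k : ℕ | ∃ Y : Finset α, Y ⊆ X ∧ Y.card = k ∧ M.rk (X \ Y) < M.rk X},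
      c ≤ k := by
    rintro k ⟨S, hSX, hScard, hSrk⟩
    obtain ⟨Y, hYZ, hYne, hYeta⟩ := M.key_lemma hXE (Finset.sdiff_subset) hSrk
    have hYm : (Y.card : ℤ) - M.rk Y ≤ m := hub ⟨Y, hYZ, hYne, rfl⟩
    have hcards : ((X \ S).card : ℤ) = (X.card : ℤ) - k := by
      rw [Finset.card_sdiff_of_subset hSX, ← hScard]
      exact_mod_cast Nat.cast_sub (Finset.card_le_card hSX)
    have hrkXS : M.rk (X \ S) ≤ M.rk X - 1 := by omega
    have : (c : ℤ) ≤ k := by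
      rw [hcval]
      omega
    exact_mod_cast this
  have hdist : M.dist X = c :=
    le_antisymm (Nat.sInf_le hmem) (le_csInf ⟨c, hmem⟩ hlb)
  rw [hdist]
  exact hcval
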